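/- Let s, y, g ∈ ℝⁿ with sᵀy > 0, s ≠ 0 and g ≠ 0, let 0 < η̄ < 0.1, let r̄ ∈ ℝ satisfy |r̄| ≤ η̄ · sᵀy, set ȳ = y + (r̄/‖s‖²) s, let ξ ≥ 1, D = ξ (‖y‖²/(sᵀy)) I, and B = D − (D s sᵀ D)/(sᵀ D s) + (ȳ ȳᵀ)/(sᵀ ȳ). Define the quadratic model φ₃(α) = f_k − α ‖g‖² + (1/2) α² gᵀBg. Then gᵀBg > 0 and the unique global minimizer of φ₃ over ℝ is ᾱ = ‖g‖² / [ ξ (‖y‖²/(sᵀy)) (‖g‖² − (gᵀs)²/‖s‖²) + (gᵀȳ)²/(sᵀȳ) ]. (This establishes the approximately optimal stepsize formula (20) for the quadratic model.) -/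

import Mathlib

open Matrix


lemma dot_vecMulVec_mulVec {n : ℕ} (u v w x : Fin n → ℝ) :
    w ⬝ᵥ (vecMulVec u v).mulVec x = (w ⬝ᵥ u) * (v ⬝ᵥ x) := by
  simp [Matrix.mulVec, vecMulVec_apply, dotProduct, Finset.mul_sum, Finset.sum_mul]
  rw [Finset.sum_comm]
  exact Finset.sum_congr rfl fun i _ => Finset.sum_congr rfl fun j _ => by ring

lemma dot_self_nonneg' {n : ℕ} (v : Fin n → ℝ) : 0 ≤ v ⬝ᵥ v :=
  Finset.sum_nonneg fun i _ => mul_self_nonneg _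

set_option maxHeartbeats 1000000

/-- The approximately optimal stepsize formula (20) for the quadratic model:
with the modified BFGS matrix `B`, one has `gᵀBg > 0` and the unique global
minimizer over `ℝ` of `φ₃(α) = f_k − α‖g‖² + (1/2)α² gᵀBg` is
`ᾱ = ‖g‖² / [ξ(‖y‖²/(sᵀy))(‖g‖² − (gᵀs)²/‖s‖²) + (gᵀȳ)²/(sᵀȳ)]`. -/
theorem stmt15 (n : ℕ) (s y g : Fin n → ℝ) (hsy : 0 < s ⬝ᵥ y) (hs : s ≠ 0)
    (hg : g ≠ 0)
    (η : ℝ) (hη0 : 0 < η) (hη1 : η < 0.1)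
    (r : ℝ) (hr : |r| ≤ η * (s ⬝ᵥ y))
    (yb : Fin n → ℝ) (hyb : yb = y + (r / (s ⬝ᵥ s)) • s)
    (ξ : ℝ) (hξ : 1 ≤ ξ)
    (D : Matrix (Fin n) (Fin n) ℝ)
    (hD : D = (ξ * ((y ⬝ᵥ y) / (s ⬝ᵥ y))) • (1 : Matrix (Fin n) (Fin n) ℝ))
    (B : Matrix (Fin n) (Fin n) ℝ)
    (hB : B = D - (s ⬝ᵥ D.mulVec s)⁻¹ • vecMulVec (D.mulVec s) (D.vecMul s)
      + (s ⬝ᵥ yb)⁻¹ • vecMulVec yb yb)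
    (fk : ℝ) (φ : ℝ → ℝ)
    (hφ : ∀ α, φ α = fk - α * (g ⬝ᵥ g) + 1 / 2 * α ^ 2 * (g ⬝ᵥ B.mulVec g))
    (αb : ℝ)
    (hαb : αb = (g ⬝ᵥ g) /
      (ξ * ((y ⬝ᵥ y) / (s ⬝ᵥ y)) * ((g ⬝ᵥ g) - (g ⬝ᵥ s) ^ 2 / (s ⬝ᵥ s))
        + (g ⬝ᵥ yb) ^ 2 / (s ⬝ᵥ yb))) :
    0 < g ⬝ᵥ B.mulVec g ∧ ∀ α : ℝ, α ≠ αb → φ αb < φ α := by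
  have hS : 0 < s ⬝ᵥ s := by
    rcases (dot_self_nonneg' s).lt_or_eq with h | h
    · exact h
    · exact absurd (dotProduct_self_eq_zero.mp h.symm) hs
  have hG : 0 < g ⬝ᵥ g := by
    rcases (dot_self_nonneg' g).lt_or_eq with h | h
    · exact h
    · exact absurd (dotProduct_self_eq_zero.mp h.symm) hg
  have hy : 0 < y ⬝ᵥ y := by
    rcases (dot_self_nonneg' y).lt_or_eq with h | h
    · exact h
    · have : y = 0 := dotProduct_self_eq_zero.mp h.symm
      rw [this] at hsy; simp at hsy
  set c : ℝ := ξ * ((y ⬝ᵥ y) / (s ⬝ᵥ y)) with hc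
  have hcpos : 0 < c := by
    have := div_pos hy hsy
    nlinarith
  have hsyb : s ⬝ᵥ yb = s ⬝ᵥ y + r := by
    rw [hyb, dotProduct_add, dotProduct_smul]
    rw [smul_eq_mul, div_mul_cancel₀ _ hS.ne']
  have hT : 0 < s ⬝ᵥ yb := by
    have h1 := (abs_le.mp hr).1
    rw [hsyb]; nlinarith
  have hDg : ∀ v : Fin n → ℝ, D.mulVec v = c • v := by
    intro v; rw [hD, smul_mulVec, one_mulVec]
  have hDvm : D.vecMul s = c • s := by
    rw [hD]; ext i; simp [Matrix.vecMul, dotProduct, Matrix.one_apply, mul_comm]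
  have key : g ⬝ᵥ B.mulVec g =
      c * ((g ⬝ᵥ g) - (g ⬝ᵥ s) ^ 2 / (s ⬝ᵥ s)) + (g ⬝ᵥ yb) ^ 2 / (s ⬝ᵥ yb) := by
    rw [hB, add_mulVec, sub_mulVec, dotProduct_add, dotProduct_sub,
      smul_mulVec, smul_mulVec, dotProduct_smul, dotProduct_smul,
      dot_vecMulVec_mulVec, dot_vecMulVec_mulVec, hDg g, hDg s, hDvm,
      dotProduct_smul, dotProduct_smul, smul_dotProduct]
    simp only [smul_eq_mul, dotProduct_smul]
    rw [dotProduct_comm yb g, dotProduct_comm s g]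
    have hcne : c ≠ 0 := ne_of_gt hcpos
    have hSne : (s ⬝ᵥ s) ≠ 0 := ne_of_gt hS
    have hTne : (s ⬝ᵥ yb) ≠ 0 := ne_of_gt hT
    field_simp
  have hCS : (g ⬝ᵥ s) ^ 2 ≤ (g ⬝ᵥ g) * (s ⬝ᵥ s) := by
    have := Finset.sum_mul_sq_le_sq_mul_sq Finset.univ g s
    simpa [dotProduct, pow_two] using this
  have hQpos : 0 < g ⬝ᵥ B.mulVec g := by
    rw [key]
    rcases lt_or_eq_of_le hCS with h | h
    · have h1 : 0 < (g ⬝ᵥ g) - (g ⬝ᵥ s) ^ 2 / (s ⬝ᵥ s) := by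
        rw [sub_pos, div_lt_iff₀ hS]; linarith
      have h2 : 0 ≤ (g ⬝ᵥ yb) ^ 2 / (s ⬝ᵥ yb) := by positivity
      nlinarith
    · have hpar : ∀ i, (s ⬝ᵥ s) * g i = (g ⬝ᵥ s) * s i := by
        have e : ∑ i, ((s ⬝ᵥ s) * g i - (g ⬝ᵥ s) * s i) ^ 2
            = (s ⬝ᵥ s) ^ 2 * (g ⬝ᵥ g) - (2 * (s ⬝ᵥ s) * (g ⬝ᵥ s)) * (g ⬝ᵥ s)
              + (g ⬝ᵥ s) ^ 2 * (s ⬝ᵥ s) := by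
          have e1 : ∀ i, ((s ⬝ᵥ s) * g i - (g ⬝ᵥ s) * s i) ^ 2
              = (s ⬝ᵥ s) ^ 2 * (g i * g i) - (2 * (s ⬝ᵥ s) * (g ⬝ᵥ s)) * (g i * s i)
                + (g ⬝ᵥ s) ^ 2 * (s i * s i) := fun i => by ring
          simp only [e1, Finset.sum_add_distrib, Finset.sum_sub_distrib,
            ← Finset.mul_sum]
          simp only [dotProduct]
        have hsum : ∑ i, ((s ⬝ᵥ s) * g i - (g ⬝ᵥ s) * s i) ^ 2 = 0 := by
          rw [e]; nlinarith
        intro i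
        have hz := (Finset.sum_eq_zero_iff_of_nonneg
          (fun i _ => sq_nonneg _)).mp hsum i (Finset.mem_univ i)
        have h2 := sq_eq_zero_iff.mp hz
        linarith [sub_eq_zero.mp h2]
      have hP : g ⬝ᵥ s ≠ 0 := by
        intro h0
        apply hg
        funext i
        have h2 := hpar i
        rw [h0, zero_mul] at h2
        exact (mul_eq_zero.mp h2).resolve_left (ne_of_gt hS)
      have hgyb : (s ⬝ᵥ s) * (g ⬝ᵥ yb) = (g ⬝ᵥ s) * (s ⬝ᵥ yb) := by
        simp only [dotProduct, Finset.mul_sum]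
        refine Finset.sum_congr rfl fun i _ => ?_
        have h2 := hpar i
        simp only [dotProduct] at h2
        linear_combination yb i * h2
      have h1 : (g ⬝ᵥ g) - (g ⬝ᵥ s) ^ 2 / (s ⬝ᵥ s) = 0 := by
        rw [h, mul_div_assoc, div_self hS.ne', mul_one, sub_self]
      rw [h1, mul_zero, zero_add]
      have h3 : g ⬝ᵥ yb = (g ⬝ᵥ s) * (s ⬝ᵥ yb) / (s ⬝ᵥ s) := by
        rw [eq_div_iff hS.ne']
        linear_combination hgyb
      rw [h3]
      positivity
  refine ⟨hQpos, fun α hα => ?_⟩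
  have hαb' : αb * (g ⬝ᵥ B.mulVec g) = g ⬝ᵥ g := by
    rw [hαb, ← key, div_mul_cancel₀ _ (ne_of_gt hQpos)]
  rw [hφ, hφ]
  have hsq : 0 < (α - αb) ^ 2 :=
    lt_of_le_of_ne (sq_nonneg _) (Ne.symm (pow_ne_zero 2 (sub_ne_zero.mpr hα)))
  rw [← hαb']
  nlinarith [mul_pos hQpos hsq]
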